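/- There exists a density f supported on [0,∞) that belongs to the subexponential density class 𝓢₀ but is not almost decreasing. -/

import Mathlib

open MeasureTheory Filter Set Topology

set_option maxHeartbeats 1000000

noncomputable section

/-- A probability density supported on `[0, ∞)`. -/
def IsDensity (f : ℝ → ℝ) : Prop :=
  Measurable f ∧ (∀ x < (0:ℝ), f x = 0) ∧ (∀ x : ℝ, 0 ≤ f x) ∧
    ∫ y in Set.Ioi (0:ℝ), f y = 1

/-- The long-tailed density class `𝓛₀`. -/
def LongTailedDensity (f : ℝ → ℝ) : Prop :=
  (∀ᶠ x in atTop, 0 < f x) ∧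
  ∀ t : ℝ, Tendsto (fun x => f (x + t) / f x) atTop (nhds 1)

/-- The subexponential density class `𝓢₀`. -/
def SubexpDensity (f : ℝ → ℝ) : Prop :=
  LongTailedDensity f ∧
  Tendsto (fun x => (∫ y in (0:ℝ)..x, f (x - y) * f y) / f x) atTop (nhds 2)

/-- `f` is almost decreasing: beyond some `x₀ ≥ 0` it is positive and the
ratios `f y / f x` for `x₀ ≤ x ≤ y` are bounded. -/
def AlmostDecreasing (f : ℝ → ℝ) : Prop :=
  ∃ x₀ : ℝ, 0 ≤ x₀ ∧ (∀ x : ℝ, x₀ ≤ x → 0 < f x) ∧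
    ∃ C : ℝ, ∀ x y : ℝ, x₀ ≤ x → x ≤ y → f y / f x ≤ C

namespace SubexpCE

/-- slowly oscillating exponent -/
def hh (v : ℝ) : ℝ := 20 * (Real.sqrt v * Real.sin (Real.sqrt v))

def M0 : ℝ := Real.exp 1600

def gg (x : ℝ) : ℝ := if M0 ≤ x then Real.exp (hh (Real.log x)) / x ^ 2 else 0

def II : ℝ := ∫ y in Set.Ioi (0:ℝ), gg y

def ff (x : ℝ) : ℝ := II⁻¹ * gg x

lemma M0_pos : 0 < M0 := Real.exp_pos _

lemma M0_ge_one : 1 ≤ M0 := by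
  rw [M0, show (1:ℝ) = Real.exp 0 by simp]
  exact Real.exp_le_exp.2 (by norm_num)

lemma log_ge {x : ℝ} (hx : M0 ≤ x) : 1600 ≤ Real.log x :=
  (Real.le_log_iff_exp_le (lt_of_lt_of_le M0_pos hx)).2 hx

lemma sqrt_ge {v : ℝ} (hv : 1600 ≤ v) : 40 ≤ Real.sqrt v := by
  have : Real.sqrt 1600 = 40 := by
    rw [show (1600:ℝ) = 40 ^ 2 by norm_num, Real.sqrt_sq (by norm_num)]
  rw [← this]
  exact Real.sqrt_le_sqrt hv

def hh' (v : ℝ) : ℝ :=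
  20 * (1 / (2 * Real.sqrt v) * Real.sin (Real.sqrt v) +
    Real.sqrt v * (Real.cos (Real.sqrt v) * (1 / (2 * Real.sqrt v))))

lemma hh_hasDerivAt {v : ℝ} (hv : 0 < v) : HasDerivAt hh (hh' v) v := by
  have hs : HasDerivAt Real.sqrt (1 / (2 * Real.sqrt v)) v := Real.hasDerivAt_sqrt hv.ne'
  have hsin : HasDerivAt (fun u => Real.sin (Real.sqrt u))
      (Real.cos (Real.sqrt v) * (1 / (2 * Real.sqrt v))) v :=
    (Real.hasDerivAt_sin _).comp v hs
  have := (hs.mul hsin).const_mul (20 : ℝ)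
  exact this

lemma hh'_bound {v : ℝ} (hv : 1600 ≤ v) : |hh' v| ≤ 11 := by
  have h40 : (40:ℝ) ≤ Real.sqrt v := sqrt_ge hv
  have hpos : (0:ℝ) < Real.sqrt v := by linarith
  have hsin : |Real.sin (Real.sqrt v)| ≤ 1 := Real.abs_sin_le_one _
  have hcos : |Real.cos (Real.sqrt v)| ≤ 1 := Real.abs_cos_le_one _
  have h1 : |1 / (2 * Real.sqrt v) * Real.sin (Real.sqrt v)| ≤ 1 / 80 := by
    rw [abs_mul]
    have : |1 / (2 * Real.sqrt v)| = 1 / (2 * Real.sqrt v) := abs_of_pos (by positivity)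
    rw [this]
    have h2 : 1 / (2 * Real.sqrt v) ≤ 1 / 80 := by
      apply one_div_le_one_div_of_le (by norm_num)
      linarith
    calc 1 / (2 * Real.sqrt v) * |Real.sin (Real.sqrt v)| ≤ 1 / (2 * Real.sqrt v) * 1 := by
          apply mul_le_mul_of_nonneg_left hsin (by positivity)
      _ ≤ 1 / 80 := by simpa using h2
  have h2 : |Real.sqrt v * (Real.cos (Real.sqrt v) * (1 / (2 * Real.sqrt v)))| ≤ 1 / 2 := by
    have heq : Real.sqrt v * (Real.cos (Real.sqrt v) * (1 / (2 * Real.sqrt v)))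
        = Real.cos (Real.sqrt v) / 2 := by
      field_simp
    rw [heq, abs_div]
    rw [abs_of_pos (show (0:ℝ) < 2 by norm_num)]
    linarith
  simp only [hh']
  rw [abs_mul, abs_of_pos (show (0:ℝ) < 20 by norm_num)]
  have := abs_add_le (1 / (2 * Real.sqrt v) * Real.sin (Real.sqrt v))
    (Real.sqrt v * (Real.cos (Real.sqrt v) * (1 / (2 * Real.sqrt v))))
  nlinarith

lemma hh_lip {v w : ℝ} (hv : 1600 ≤ v) (hw : 1600 ≤ w) : |hh v - hh w| ≤ 11 * |v - w| := by
  have hconv : Convex ℝ (Set.Ici (1600:ℝ)) := convex_Ici _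
  have hder : ∀ x ∈ Set.Ici (1600:ℝ), HasDerivWithinAt hh (hh' x) (Set.Ici (1600:ℝ)) x :=
    fun x hx => (hh_hasDerivAt (by simp at hx; linarith)).hasDerivWithinAt
  have := hconv.norm_image_sub_le_of_norm_hasDerivWithin_le hder
    (fun x hx => by simpa using hh'_bound hx) hw hv
  simpa [Real.norm_eq_abs] using this


lemma hh_abs_le {v : ℝ} (hv : 1600 ≤ v) : |hh v| ≤ v / 2 := by
  have h40 : (40:ℝ) ≤ Real.sqrt v := sqrt_ge hv
  have hsq : Real.sqrt v * Real.sqrt v = v := Real.mul_self_sqrt (by linarith)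
  have hsin : |Real.sin (Real.sqrt v)| ≤ 1 := Real.abs_sin_le_one _
  have : |hh v| ≤ 20 * Real.sqrt v := by
    rw [hh, abs_mul, abs_mul, abs_of_pos (show (0:ℝ) < 20 by norm_num),
      abs_of_nonneg (Real.sqrt_nonneg v)]
    nlinarith [Real.sqrt_nonneg v]
  nlinarith

lemma gg_nonneg (x : ℝ) : 0 ≤ gg x := by
  rw [gg]; split
  · positivity
  · exact le_rfl

lemma gg_eq {x : ℝ} (hx : M0 ≤ x) : gg x = Real.exp (hh (Real.log x)) / x ^ 2 := if_pos hx

lemma gg_pos {x : ℝ} (hx : M0 ≤ x) : 0 < gg x := by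
  rw [gg_eq hx]
  have hx0 : 0 < x := lt_of_lt_of_le M0_pos hx
  positivity

lemma exp_hh_le {x : ℝ} (hx : M0 ≤ x) : Real.exp (hh (Real.log x)) ≤ Real.sqrt x := by
  have h1 : 1600 ≤ Real.log x := log_ge hx
  have h2 : hh (Real.log x) ≤ Real.log x / 2 := le_trans (le_abs_self _) (hh_abs_le h1)
  have hx0 : 0 < x := lt_of_lt_of_le M0_pos hx
  calc Real.exp (hh (Real.log x)) ≤ Real.exp (Real.log x / 2) := Real.exp_le_exp.2 h2
    _ = Real.sqrt x := by
        rw [Real.sqrt_eq_rpow, Real.rpow_def_of_pos hx0]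
        ring_nf

lemma gg_le_one (x : ℝ) : gg x ≤ 1 := by
  rw [gg]; split
  · rename_i hx
    have hx0 : 0 < x := lt_of_lt_of_le M0_pos hx
    have h1 : Real.exp (hh (Real.log x)) ≤ Real.sqrt x := exp_hh_le hx
    have h1x : (1:ℝ) ≤ Real.sqrt x := by
      rw [show (1:ℝ) = Real.sqrt 1 by simp]
      exact Real.sqrt_le_sqrt (le_trans M0_ge_one hx)
    have hsq : Real.sqrt x * Real.sqrt x = x := Real.mul_self_sqrt hx0.le
    have hx1 : (1:ℝ) ≤ x := le_trans M0_ge_one hx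
    rw [div_le_one (by positivity)]
    nlinarith [hsq, h1x, hx1, sq_nonneg (x - 1), sq_nonneg (Real.sqrt x - 1)]
  · norm_num

lemma continuous_hh : Continuous hh := by
  have : Continuous fun v : ℝ => 20 * (Real.sqrt v * Real.sin (Real.sqrt v)) :=
    continuous_const.mul (Real.continuous_sqrt.mul
      (Real.continuous_sin.comp Real.continuous_sqrt))
  exact this

lemma measurable_gg : Measurable gg := by
  apply Measurable.ite measurableSet_Ici
  · exact (Real.measurable_exp.comp
      (continuous_hh.measurable.comp Real.measurable_log)).div
      ((measurable_id.pow_const 2))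
  · exact measurable_const


lemma gg_le_rpow {x : ℝ} (hx : M0 ≤ x) : gg x ≤ x ^ (-(3/2) : ℝ) := by
  have hx0 : 0 < x := lt_of_lt_of_le M0_pos hx
  have h1 : Real.exp (hh (Real.log x)) ≤ Real.sqrt x := exp_hh_le hx
  have h2 : Real.sqrt x / x ^ 2 = x ^ (-(3/2) : ℝ) := by
    rw [Real.sqrt_eq_rpow, show (x:ℝ) ^ 2 = x ^ ((2:ℕ):ℝ) by rw [Real.rpow_natCast],
      ← Real.rpow_sub hx0]
    norm_num
  rw [gg_eq hx, ← h2]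
  exact div_le_div_of_nonneg_right h1 (by positivity) |>.trans_eq rfl

lemma gg_integrableOn : IntegrableOn gg (Set.Ioi (0:ℝ)) := by
  have hb : IntegrableOn (fun y : ℝ => y ^ (-(3/2) : ℝ)) (Set.Ioi M0) :=
    integrableOn_Ioi_rpow_of_lt (by norm_num) M0_pos
  have hb2 : IntegrableOn (fun y : ℝ => y ^ (-(3/2) : ℝ)) (Set.Ici M0) :=
    (integrableOn_Ici_iff_integrableOn_Ioi).2 hb
  have hb3 : Integrable (Set.indicator (Set.Ici M0) fun y : ℝ => y ^ (-(3/2) : ℝ)) := by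
    rwa [integrable_indicator_iff measurableSet_Ici]
  apply Integrable.mono' (hb3.integrableOn)
    measurable_gg.aestronglyMeasurable.restrict
  · filter_upwards with x
    rw [Real.norm_eq_abs, abs_of_nonneg (gg_nonneg x)]
    by_cases hx : M0 ≤ x
    · rw [Set.indicator_of_mem (Set.mem_Ici.2 hx)]
      exact gg_le_rpow hx
    · rw [Set.indicator_of_notMem (by simpa using hx), gg, if_neg hx]

lemma II_pos : 0 < II := by
  rw [II]
  rw [setIntegral_pos_iff_support_of_nonneg_ae
    (Filter.Eventually.of_forall fun x => gg_nonneg x) gg_integrableOn]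
  have hsub : Set.Ici M0 ⊆ Function.support gg ∩ Set.Ioi 0 := by
    intro x hx
    exact ⟨(gg_pos hx).ne', lt_of_lt_of_le M0_pos hx⟩
  calc (0:ENNReal) < volume (Set.Ici M0) := by simp
    _ ≤ volume (Function.support gg ∩ Set.Ioi 0) := measure_mono hsub

lemma ff_nonneg (x : ℝ) : 0 ≤ ff x := mul_nonneg (inv_nonneg.2 II_pos.le) (gg_nonneg x)

lemma ff_pos {x : ℝ} (hx : M0 ≤ x) : 0 < ff x := mul_pos (inv_pos.2 II_pos) (gg_pos hx)

lemma measurable_ff : Measurable ff := measurable_gg.const_mul _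

lemma ff_le (x : ℝ) : ff x ≤ II⁻¹ := by
  have := gg_le_one x
  have h2 : (0:ℝ) ≤ II⁻¹ := inv_nonneg.2 II_pos.le
  calc ff x = II⁻¹ * gg x := rfl
    _ ≤ II⁻¹ * 1 := mul_le_mul_of_nonneg_left this h2
    _ = II⁻¹ := mul_one _

lemma ff_integrableOn : IntegrableOn ff (Set.Ioi (0:ℝ)) := gg_integrableOn.const_mul _

lemma ff_integral_one : ∫ y in Set.Ioi (0:ℝ), ff y = 1 := by
  rw [show ff = fun y => II⁻¹ * gg y from rfl]
  rw [integral_const_mul]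
  exact inv_mul_cancel₀ II_pos.ne'

lemma ff_zero_of_lt {x : ℝ} (hx : x < M0) : ff x = 0 := by
  rw [ff, gg, if_neg (not_le.2 hx), mul_zero]


lemma gg_div_le {u x : ℝ} (hu : M0 ≤ u) (hx : M0 ≤ x) :
    gg u ≤ (x / u) ^ 2 * Real.exp (11 * |Real.log u - Real.log x|) * gg x := by
  have hu0 : 0 < u := lt_of_lt_of_le M0_pos hu
  have hx0 : 0 < x := lt_of_lt_of_le M0_pos hx
  have hlip : hh (Real.log u) - hh (Real.log x) ≤ 11 * |Real.log u - Real.log x| :=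
    le_trans (le_abs_self _) (hh_lip (log_ge hu) (log_ge hx))
  rw [gg_eq hu, gg_eq hx]
  have key : Real.exp (hh (Real.log u)) ≤
      Real.exp (11 * |Real.log u - Real.log x|) * Real.exp (hh (Real.log x)) := by
    rw [← Real.exp_add]
    exact Real.exp_le_exp.2 (by linarith)
  have heq : (x / u) ^ 2 * Real.exp (11 * |Real.log u - Real.log x|) *
      (Real.exp (hh (Real.log x)) / x ^ 2)
      = (Real.exp (11 * |Real.log u - Real.log x|) * Real.exp (hh (Real.log x))) / u ^ 2 := by
    field_simp
  rw [heq]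
  gcongr

def CC : ℝ := 4 * Real.exp 8

lemma CC_pos : 0 < CC := by unfold CC; positivity

lemma gg_dyadic {u x : ℝ} (hu : M0 ≤ u) (hux : u ≤ x) (hxu : x ≤ 2 * u) :
    gg u ≤ CC * gg x := by
  have hu0 : 0 < u := lt_of_lt_of_le M0_pos hu
  have hx0 : 0 < x := lt_of_lt_of_le hu0 hux
  have hx : M0 ≤ x := le_trans hu hux
  have h1 : (x / u) ^ 2 ≤ 4 := by
    have : x / u ≤ 2 := (div_le_iff₀ hu0).2 (by linarith)
    have h0 : 0 ≤ x / u := by positivity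
    nlinarith
  have h2 : Real.exp (11 * |Real.log u - Real.log x|) ≤ Real.exp 8 := by
    apply Real.exp_le_exp.2
    have hle : Real.log u ≤ Real.log x := Real.log_le_log hu0 hux
    have habs : |Real.log u - Real.log x| = Real.log x - Real.log u := by
      rw [abs_sub_comm, abs_of_nonneg (by linarith)]
    have hdiv : Real.log x - Real.log u = Real.log (x / u) := (Real.log_div hx0.ne' hu0.ne').symm
    have hlog2 : Real.log (x / u) ≤ Real.log 2 :=
      Real.log_le_log (by positivity) ((div_le_iff₀ hu0).2 (by linarith))
    have := Real.log_two_lt_d9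
    rw [habs, hdiv]
    nlinarith
  calc gg u ≤ (x / u) ^ 2 * Real.exp (11 * |Real.log u - Real.log x|) * gg x :=
        gg_div_le hu hx
    _ ≤ 4 * Real.exp 8 * gg x := by
        apply mul_le_mul_of_nonneg_right _ (gg_nonneg x)
        exact mul_le_mul h1 h2 (Real.exp_pos _).le (by norm_num)
    _ = CC * gg x := rfl

/-- uniform comparison factor on a window of width `T` -/
def phi (T x : ℝ) : ℝ :=
  (x / (x - T)) ^ 2 * Real.exp (11 * (Real.log x - Real.log (x - T)))

lemma phi_ge_one {T x : ℝ} (hT : 0 ≤ T) (hx : M0 + T ≤ x) : 1 ≤ phi T x := by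
  have hxT : 0 < x - T := by have := M0_pos; linarith
  have h1 : 1 ≤ x / (x - T) := (le_div_iff₀ hxT).2 (by linarith)
  have h2 : Real.log (x - T) ≤ Real.log x := Real.log_le_log hxT (by linarith)
  have h3 : 1 ≤ Real.exp (11 * (Real.log x - Real.log (x - T))) := by
    rw [show (1:ℝ) = Real.exp 0 by simp]
    exact Real.exp_le_exp.2 (by linarith)
  have : 1 ≤ (x / (x - T)) ^ 2 := by nlinarith
  rw [phi]
  nlinarith

lemma gg_local {T x y : ℝ} (hT : 0 ≤ T) (hx : M0 + T ≤ x) (hy0 : 0 ≤ y) (hyT : y ≤ T) :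
    gg (x - y) ≤ phi T x * gg x ∧ gg x ≤ phi T x * gg (x - y) := by
  have hxT : 0 < x - T := by have := M0_pos; linarith
  have hu : M0 ≤ x - y := by linarith
  have hxM : M0 ≤ x := by linarith
  have hu0 : 0 < x - y := lt_of_lt_of_le M0_pos hu
  have hx0 : 0 < x := lt_of_lt_of_le M0_pos hxM
  have hlog1 : Real.log (x - T) ≤ Real.log (x - y) := Real.log_le_log hxT (by linarith)
  have hlog2 : Real.log (x - y) ≤ Real.log x := Real.log_le_log hu0 (by linarith)
  have habs : |Real.log (x - y) - Real.log x| ≤ Real.log x - Real.log (x - T) := by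
    rw [abs_sub_comm, abs_of_nonneg (by linarith)]
    linarith
  have hE : Real.exp (11 * |Real.log (x - y) - Real.log x|)
      ≤ Real.exp (11 * (Real.log x - Real.log (x - T))) :=
    Real.exp_le_exp.2 (by nlinarith [abs_nonneg (Real.log (x - y) - Real.log x)])
  constructor
  · have hq : (x / (x - y)) ^ 2 ≤ (x / (x - T)) ^ 2 := by
      have h1 : x / (x - y) ≤ x / (x - T) :=
        div_le_div_of_nonneg_left hx0.le hxT (by linarith)
      have h0 : 0 ≤ x / (x - y) := by positivity
      exact pow_le_pow_left₀ h0 h1 2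
    calc gg (x - y) ≤ (x / (x - y)) ^ 2 * Real.exp (11 * |Real.log (x - y) - Real.log x|) * gg x :=
          gg_div_le hu hxM
      _ ≤ phi T x * gg x := by
          apply mul_le_mul_of_nonneg_right _ (gg_nonneg x)
          exact mul_le_mul hq hE (Real.exp_pos _).le (by positivity)
  · have hq : ((x - y) / x) ^ 2 ≤ 1 := by
      have h1 : (x - y) / x ≤ 1 := (div_le_one hx0).2 (by linarith)
      have h0 : 0 ≤ (x - y) / x := by positivity
      nlinarith
    have habs2 : |Real.log x - Real.log (x - y)| = |Real.log (x - y) - Real.log x| :=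
      abs_sub_comm _ _
    have hq1 : 1 ≤ (x / (x - T)) ^ 2 := by
      have h1 : 1 ≤ x / (x - T) := (le_div_iff₀ hxT).2 (by linarith)
      nlinarith
    calc gg x ≤ ((x - y) / x) ^ 2 * Real.exp (11 * |Real.log x - Real.log (x - y)|) * gg (x - y) :=
          gg_div_le hxM hu
      _ ≤ 1 * Real.exp (11 * (Real.log x - Real.log (x - T))) * gg (x - y) := by
          apply mul_le_mul_of_nonneg_right _ (gg_nonneg _)
          rw [habs2]
          exact mul_le_mul hq hE (Real.exp_pos _).le (by norm_num)
      _ ≤ phi T x * gg (x - y) := by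
          rw [one_mul, phi]
          apply mul_le_mul_of_nonneg_right _ (gg_nonneg _)
          nlinarith [Real.exp_pos (11 * (Real.log x - Real.log (x - T)))]

lemma tendsto_div_add (t : ℝ) : Tendsto (fun x : ℝ => x / (x + t)) atTop (𝓝 1) := by
  have h1 : Tendsto (fun x : ℝ => t / (x + t)) atTop (𝓝 0) :=
    Tendsto.div_atTop tendsto_const_nhds (tendsto_atTop_add_const_right _ t tendsto_id)
  have h2 : Tendsto (fun x : ℝ => 1 - t / (x + t)) atTop (𝓝 (1 - 0)) := tendsto_const_nhds.sub h1
  rw [sub_zero] at h2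
  apply h2.congr'
  filter_upwards [eventually_gt_atTop (|t| + 1)] with x hx
  have ht : -|t| ≤ t := neg_abs_le t
  have : x + t ≠ 0 := by nlinarith [abs_nonneg t]
  field_simp
  ring

lemma tendsto_logd (t : ℝ) : Tendsto (fun x : ℝ => Real.log (x + t) - Real.log x) atTop (𝓝 0) := by
  have h1 : Tendsto (fun x : ℝ => Real.log (x / (x + t))) atTop (𝓝 0) := by
    have := (Real.continuousAt_log one_ne_zero).tendsto.comp (tendsto_div_add t)
    simpa [Function.comp_def] using this
  have h2 : Tendsto (fun x : ℝ => -Real.log (x / (x + t))) atTop (𝓝 (-0)) := h1.neg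
  rw [neg_zero] at h2
  apply h2.congr'
  filter_upwards [eventually_gt_atTop (|t| + 1)] with x hx
  have ht : -|t| ≤ t := neg_abs_le t
  have hx0 : (0:ℝ) < x := by nlinarith [abs_nonneg t]
  have hxt : (0:ℝ) < x + t := by nlinarith
  rw [Real.log_div hx0.ne' hxt.ne']
  ring

lemma phi_tendsto (T : ℝ) : Tendsto (fun x => phi T x) atTop (𝓝 1) := by
  have h1 : Tendsto (fun x : ℝ => (x / (x - T)) ^ 2) atTop (𝓝 1) := by
    have := (tendsto_div_add (-T)).pow 2
    simpa [sub_eq_add_neg] using this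
  have h2 : Tendsto (fun x : ℝ => Real.exp (11 * (Real.log x - Real.log (x - T)))) atTop
      (𝓝 1) := by
    have hd := tendsto_logd (-T)
    have : Tendsto (fun x : ℝ => 11 * (Real.log x - Real.log (x - T))) atTop (𝓝 0) := by
      have := (hd.neg).const_mul (11:ℝ)
      simpa [sub_eq_add_neg, mul_comm] using this
    have := (Real.continuous_exp.tendsto 0).comp this
    simpa [Function.comp_def] using this
  have := h1.mul h2
  simpa [phi] using this


lemma ff_div_eq (a b : ℝ) : ff a / ff b = gg a / gg b := by
  rw [ff, ff, mul_div_mul_left _ _ (inv_ne_zero II_pos.ne')]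

lemma ff_ratio_tendsto (t : ℝ) : Tendsto (fun x => ff (x + t) / ff x) atTop (𝓝 1) := by
  set a : ℝ → ℝ := fun x => 11 * |Real.log (x + t) - Real.log x| with ha
  set q : ℝ → ℝ := fun x => (x / (x + t)) ^ 2 with hq
  have hqt : Tendsto q atTop (𝓝 1) := by
    have := (tendsto_div_add t).pow 2
    simpa using this
  have hat : Tendsto a atTop (𝓝 0) := by
    have h1 : Tendsto (fun x => |Real.log (x + t) - Real.log x|) atTop (𝓝 |0|) :=
      (tendsto_logd t).abs
    rw [abs_zero] at h1
    have := h1.const_mul (11:ℝ)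
    simpa using this
  have hU : Tendsto (fun x => q x * Real.exp (a x)) atTop (𝓝 1) := by
    have h2 : Tendsto (fun x => Real.exp (a x)) atTop (𝓝 1) := by
      have := (Real.continuous_exp.tendsto 0).comp hat
      simpa [Function.comp_def] using this
    have := hqt.mul h2
    simpa using this
  have hL : Tendsto (fun x => q x * Real.exp (-a x)) atTop (𝓝 1) := by
    have h2 : Tendsto (fun x => Real.exp (-a x)) atTop (𝓝 1) := by
      have hneg : Tendsto (fun x => -a x) atTop (𝓝 0) := by
        have := hat.neg; rwa [neg_zero] at this
      have := (Real.continuous_exp.tendsto 0).comp hneg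
      simpa [Function.comp_def] using this
    have := hqt.mul h2
    simpa using this
  apply tendsto_of_tendsto_of_tendsto_of_le_of_le' hL hU
  · filter_upwards [eventually_ge_atTop (M0 + |t| + 1)] with x hx
    have hxM : M0 ≤ x := by nlinarith [abs_nonneg t]
    have hxtM : M0 ≤ x + t := by nlinarith [neg_abs_le t]
    have hx0 : 0 < x := lt_of_lt_of_le M0_pos hxM
    have hxt0 : 0 < x + t := lt_of_lt_of_le M0_pos hxtM
    rw [ff_div_eq, le_div_iff₀ (gg_pos hxM)]
    have low := gg_div_le hxM hxtM
    have habs : |Real.log x - Real.log (x + t)| = |Real.log (x + t) - Real.log x| :=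
      abs_sub_comm _ _
    rw [habs] at low
    have hnn : 0 ≤ q x * Real.exp (-a x) := by positivity
    have := mul_le_mul_of_nonneg_left low hnn
    have e1 : q x * Real.exp (-a x) * (((x + t) / x) ^ 2 *
        Real.exp (a x) * gg (x + t)) = gg (x + t) := by
      rw [hq, Real.exp_neg]
      field_simp
    calc q x * Real.exp (-a x) * gg x
        ≤ q x * Real.exp (-a x) * (((x + t) / x) ^ 2 * Real.exp (a x) * gg (x + t)) := this
      _ = gg (x + t) := e1
  · filter_upwards [eventually_ge_atTop (M0 + |t| + 1)] with x hx
    have hxM : M0 ≤ x := by nlinarith [abs_nonneg t]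
    have hxtM : M0 ≤ x + t := by nlinarith [neg_abs_le t]
    rw [ff_div_eq, div_le_iff₀ (gg_pos hxM)]
    exact gg_div_le hxtM hxM


lemma intInt_prod (x a b : ℝ) : IntervalIntegrable (fun y => ff (x - y) * ff y) volume a b := by
  rw [intervalIntegrable_iff]
  apply Measure.integrableOn_of_bounded (M := II⁻¹ * II⁻¹) measure_Ioc_lt_top.ne
  · exact ((measurable_ff.comp (measurable_const.sub measurable_id)).mul
      measurable_ff).aestronglyMeasurable
  · filter_upwards with y
    rw [Real.norm_eq_abs, abs_of_nonneg (mul_nonneg (ff_nonneg _) (ff_nonneg _))]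
    exact mul_le_mul (ff_le _) (ff_le _) (ff_nonneg _) (inv_nonneg.2 II_pos.le)

lemma intInt_ff (a b : ℝ) : IntervalIntegrable ff volume a b := by
  rw [intervalIntegrable_iff]
  apply Measure.integrableOn_of_bounded (M := II⁻¹) measure_Ioc_lt_top.ne
  · exact measurable_ff.aestronglyMeasurable
  · filter_upwards with y
    rw [Real.norm_eq_abs, abs_of_nonneg (ff_nonneg _)]
    exact ff_le _

lemma conv_symm (x : ℝ) :
    (∫ y in (0:ℝ)..x, ff (x - y) * ff y) = 2 * ∫ y in (0:ℝ)..(x / 2), ff (x - y) * ff y := by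
  have hsplit := intervalIntegral.integral_add_adjacent_intervals
    (intInt_prod x 0 (x / 2)) (intInt_prod x (x / 2) x)
  have h1 : (∫ y in (x / 2)..x, ff (x - y) * ff y)
      = ∫ y in (0:ℝ)..(x / 2), ff (x - y) * ff y := by
    have h2 := intervalIntegral.integral_comp_sub_left
      (a := x / 2) (b := x) (fun u => ff u * ff (x - u)) x
    have h3 : (∫ y in (x / 2)..x, ff (x - y) * ff (x - (x - y)))
        = ∫ y in (x / 2)..x, ff (x - y) * ff y := by
      apply intervalIntegral.integral_congr
      intro y _
      simp [sub_sub_cancel]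
    rw [h3] at h2
    rw [h2]
    have h4 : x - x = 0 := by ring
    have h5 : x - x / 2 = x / 2 := by ring
    rw [h4, h5]
    apply intervalIntegral.integral_congr
    intro y _
    exact mul_comm _ _
  rw [← hsplit, h1]
  ring

def JJ (T : ℝ) : ℝ := ∫ y in (0:ℝ)..T, ff y
def KK (T : ℝ) : ℝ := ∫ y in Set.Ioi T, ff y

lemma JJ_nonneg {T : ℝ} (hT : 0 ≤ T) : 0 ≤ JJ T :=
  intervalIntegral.integral_nonneg hT fun y _ => ff_nonneg y

lemma KK_nonneg (T : ℝ) : 0 ≤ KK T :=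
  setIntegral_nonneg measurableSet_Ioi fun y _ => ff_nonneg y

lemma JJ_add_KK {T : ℝ} (hT : 0 ≤ T) : JJ T + KK T = 1 := by
  have hd : Disjoint (Set.Ioc (0:ℝ) T) (Set.Ioi T) := by
    rw [Set.disjoint_left]
    intro y hy1 hy2
    exact absurd hy1.2 (not_le.2 hy2)
  have hu : Set.Ioc (0:ℝ) T ∪ Set.Ioi T = Set.Ioi 0 := Set.Ioc_union_Ioi_eq_Ioi hT
  have h1 : IntegrableOn ff (Set.Ioc (0:ℝ) T) := ff_integrableOn.mono_set (by
    rw [← hu]; exact Set.subset_union_left)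
  have h2 : IntegrableOn ff (Set.Ioi T) := ff_integrableOn.mono_set (by
    rw [← hu]; exact Set.subset_union_right)
  have := setIntegral_union hd measurableSet_Ioi h1 h2 (f := ff) (μ := volume)
  rw [hu] at this
  rw [JJ, KK, intervalIntegral.integral_of_le hT, ← ff_integral_one, this]

lemma JJ_le_one {T : ℝ} (hT : 0 ≤ T) : JJ T ≤ 1 := by
  have := JJ_add_KK hT
  have := KK_nonneg T
  linarith

lemma KK_tendsto : Tendsto KK atTop (𝓝 0) := by
  have hJ : Tendsto JJ atTop (𝓝 1) := by
    have := intervalIntegral_tendsto_integral_Ioi 0 ff_integrableOn tendsto_id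
    rwa [ff_integral_one] at this
  have h2 : Tendsto (fun T => 1 - JJ T) atTop (𝓝 (1 - 1)) := tendsto_const_nhds.sub hJ
  rw [sub_self] at h2
  apply h2.congr'
  filter_upwards [eventually_ge_atTop (0:ℝ)] with T hT
  have := JJ_add_KK hT
  linarith

lemma AA_bounds {T x : ℝ} (hT : 0 ≤ T) (hx : M0 + T ≤ x) :
    (∫ y in (0:ℝ)..T, ff (x - y) * ff y) ≤ phi T x * ff x * JJ T ∧
    ff x * JJ T ≤ phi T x * (∫ y in (0:ℝ)..T, ff (x - y) * ff y) := by
  have hII : (0:ℝ) ≤ II⁻¹ := inv_nonneg.2 II_pos.le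
  constructor
  · have := intervalIntegral.integral_mono_on (a := 0) (b := T) (μ := volume) hT
      (intInt_prod x 0 T) ((intInt_ff 0 T).const_mul (phi T x * ff x))
      (fun y hy => ?_)
    · have e1 : (∫ y in (0:ℝ)..T, phi T x * ff x * ff y) = phi T x * ff x * JJ T := by
        rw [intervalIntegral.integral_const_mul]; rfl
      rw [← e1]
      exact this
    · have hloc := (gg_local hT hx hy.1 hy.2).1
      have : ff (x - y) ≤ phi T x * ff x := by
        rw [ff, ff]
        calc II⁻¹ * gg (x - y) ≤ II⁻¹ * (phi T x * gg x) :=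
              mul_le_mul_of_nonneg_left hloc hII
          _ = phi T x * (II⁻¹ * gg x) := by ring
      exact mul_le_mul_of_nonneg_right this (ff_nonneg y)
  · have := intervalIntegral.integral_mono_on (a := 0) (b := T) (μ := volume) hT
      ((intInt_ff 0 T).const_mul (ff x)) ((intInt_prod x 0 T).const_mul (phi T x))
      (fun y hy => ?_)
    · have e1 : (∫ y in (0:ℝ)..T, ff x * ff y) = ff x * JJ T := by
        rw [intervalIntegral.integral_const_mul]; rfl
      have e2 : (∫ y in (0:ℝ)..T, phi T x * (ff (x - y) * ff y))
          = phi T x * ∫ y in (0:ℝ)..T, ff (x - y) * ff y := by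
        rw [intervalIntegral.integral_const_mul]
      rw [← e1, ← e2]
      exact this
    · have hloc := (gg_local hT hx hy.1 hy.2).2
      have h1 : ff x ≤ phi T x * ff (x - y) := by
        rw [ff, ff]
        calc II⁻¹ * gg x ≤ II⁻¹ * (phi T x * gg (x - y)) :=
              mul_le_mul_of_nonneg_left hloc hII
          _ = phi T x * (II⁻¹ * gg (x - y)) := by ring
      calc ff x * ff y ≤ phi T x * ff (x - y) * ff y :=
            mul_le_mul_of_nonneg_right h1 (ff_nonneg y)
        _ = phi T x * (ff (x - y) * ff y) := by ring

lemma BB_bounds {T x : ℝ} (hT : 0 ≤ T) (hTx : T ≤ x / 2) (hxM : 2 * M0 ≤ x) :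
    0 ≤ (∫ y in T..(x / 2), ff (x - y) * ff y) ∧
    (∫ y in T..(x / 2), ff (x - y) * ff y) ≤ CC * ff x * KK T := by
  constructor
  · exact intervalIntegral.integral_nonneg hTx
      (fun y _ => mul_nonneg (ff_nonneg _) (ff_nonneg _))
  · have step1 : (∫ y in T..(x / 2), ff (x - y) * ff y)
        ≤ ∫ y in T..(x / 2), CC * ff x * ff y := by
      apply intervalIntegral.integral_mono_on hTx (intInt_prod x T (x / 2))
        ((intInt_ff T (x / 2)).const_mul (CC * ff x))
      intro y hy
      have hu : M0 ≤ x - y := by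
        have := hy.2; linarith
      have hdy := gg_dyadic (u := x - y) (x := x) hu (by have h := hy.1; linarith)
        (by have h := hy.2; linarith)
      have h1 : ff (x - y) ≤ CC * ff x := by
        rw [ff, ff]
        calc II⁻¹ * gg (x - y) ≤ II⁻¹ * (CC * gg x) :=
              mul_le_mul_of_nonneg_left hdy (inv_nonneg.2 II_pos.le)
          _ = CC * (II⁻¹ * gg x) := by ring
      exact mul_le_mul_of_nonneg_right h1 (ff_nonneg y)
    have step2 : (∫ y in T..(x / 2), ff y) ≤ KK T := by
      rw [intervalIntegral.integral_of_le hTx, KK]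
      apply setIntegral_mono_set (ff_integrableOn.mono_set (Set.Ioi_subset_Ioi hT))
        (Filter.Eventually.of_forall fun y => ff_nonneg y)
      exact HasSubset.Subset.eventuallyLE Set.Ioc_subset_Ioi_self
    calc (∫ y in T..(x / 2), ff (x - y) * ff y) ≤ ∫ y in T..(x / 2), CC * ff x * ff y := step1
      _ = CC * ff x * ∫ y in T..(x / 2), ff y := by rw [intervalIntegral.integral_const_mul]
      _ ≤ CC * ff x * KK T := by
          apply mul_le_mul_of_nonneg_left step2
          exact mul_nonneg CC_pos.le (ff_nonneg x)


lemma conv_tendsto :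
    Tendsto (fun x => (∫ y in (0:ℝ)..x, ff (x - y) * ff y) / ff x) atTop (𝓝 2) := by
  rw [Metric.tendsto_atTop]
  intro ε hε
  set ε' : ℝ := min ε 1 with hε'def
  have hε'0 : 0 < ε' := lt_min hε one_pos
  have hε'1 : ε' ≤ 1 := min_le_right _ _
  have hε'ε : ε' ≤ ε := min_le_left _ _
  set δ : ℝ := ε' / (8 * (CC + 1)) with hδdef
  have hden : (0:ℝ) < 8 * (CC + 1) := by nlinarith [CC_pos]
  have hδ0 : 0 < δ := div_pos hε'0 hden
  have hCCδ : CC * δ ≤ ε' / 8 := by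
    rw [hδdef, ← mul_div_assoc, div_le_div_iff₀ hden (by norm_num)]
    nlinarith [CC_pos, hε'0]
  have hδε : δ ≤ ε' / 8 := by
    rw [hδdef, div_le_div_iff₀ hden (by norm_num)]
    nlinarith [CC_pos, hε'0]
  obtain ⟨N₀, hN₀⟩ := Metric.tendsto_atTop.1 KK_tendsto δ hδ0
  set T : ℝ := max N₀ 0 with hTdef
  have hT : 0 ≤ T := le_max_right _ _
  have hKδ : KK T ≤ δ := by
    have := hN₀ T (le_max_left _ _)
    rw [Real.dist_eq, sub_zero] at this
    exact le_of_lt (lt_of_le_of_lt (le_abs_self _) this)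
  obtain ⟨N₁, hN₁⟩ := Metric.tendsto_atTop.1 (phi_tendsto T) (ε' / 8) (by linarith)
  refine ⟨max N₁ (2 * M0 + 2 * T + 2), fun x hx => ?_⟩
  have hx1 : N₁ ≤ x := le_trans (le_max_left _ _) hx
  have hx2 : 2 * M0 + 2 * T + 2 ≤ x := le_trans (le_max_right _ _) hx
  have hM0 := M0_pos
  have hxMT : M0 + T ≤ x := by linarith
  have hxM2 : 2 * M0 ≤ x := by linarith
  have hTx2 : T ≤ x / 2 := by linarith
  have hxM : M0 ≤ x := by linarith
  have hP : 0 < ff x := ff_pos hxM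
  set a : ℝ := ∫ y in (0:ℝ)..T, ff (x - y) * ff y with hadef
  set b : ℝ := ∫ y in T..(x / 2), ff (x - y) * ff y with hbdef
  set p : ℝ := phi T x with hpdef
  set J : ℝ := JJ T
  set K : ℝ := KK T
  set P : ℝ := ff x
  have hsplit : a + b = ∫ y in (0:ℝ)..(x / 2), ff (x - y) * ff y :=
    intervalIntegral.integral_add_adjacent_intervals (intInt_prod x 0 T) (intInt_prod x T (x / 2))
  have hR : (∫ y in (0:ℝ)..x, ff (x - y) * ff y) / ff x = 2 * (a + b) / P := by
    rw [conv_symm x, hsplit]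
  have hAB := AA_bounds hT hxMT
  have h1 : a ≤ p * P * J := hAB.1
  have h2 : P * J ≤ p * a := hAB.2
  have hBB := BB_bounds hT hTx2 hxM2
  have h3 : (0:ℝ) ≤ b := hBB.1
  have h4 : b ≤ CC * P * K := hBB.2
  have h5 : 1 ≤ p := phi_ge_one hT hxMT
  have h6 : p < 1 + ε' / 8 := by
    have := hN₁ x hx1
    rw [Real.dist_eq] at this
    have := (abs_lt.1 this).2
    linarith
  have h7 : J + K = 1 := JJ_add_KK hT
  have h8 : (0:ℝ) ≤ K := KK_nonneg T
  have h10 : (0:ℝ) ≤ J := JJ_nonneg hT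
  have h11 : J ≤ 1 := JJ_le_one hT
  have ha0 : (0:ℝ) ≤ a := intervalIntegral.integral_nonneg hT
    (fun y _ => mul_nonneg (ff_nonneg _) (ff_nonneg _))
  have hpP : (0:ℝ) ≤ p * P := mul_nonneg (by linarith) hP.le
  have ha_ub : a ≤ (1 + ε' / 8) * P := by
    calc a ≤ p * P * J := h1
      _ ≤ p * P * 1 := mul_le_mul_of_nonneg_left h11 hpP
      _ = p * P := mul_one _
      _ ≤ (1 + ε' / 8) * P := mul_le_mul_of_nonneg_right h6.le hP.le
  have hb_ub : b ≤ ε' / 8 * P := by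
    calc b ≤ CC * P * K := h4
      _ = (CC * K) * P := by ring
      _ ≤ (CC * δ) * P := by
          apply mul_le_mul_of_nonneg_right _ hP.le
          exact mul_le_mul_of_nonneg_left hKδ CC_pos.le
      _ ≤ ε' / 8 * P := mul_le_mul_of_nonneg_right hCCδ hP.le
  have ha_lb : (1 - ε' / 2) * P < a := by
    have hJlb : 1 - ε' / 8 ≤ J := by linarith
    have hstep : P * (1 - ε' / 8) ≤ p * a :=
      le_trans (mul_le_mul_of_nonneg_left hJlb hP.le) h2
    have hpa : p * a ≤ (1 + ε' / 8) * a := mul_le_mul_of_nonneg_right h6.le ha0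
    have hprod : ε' / 8 * a ≤ ε' / 8 * ((1 + ε' / 8) * P) :=
      mul_le_mul_of_nonneg_left ha_ub (by linarith)
    have hsq : ε' * (ε' * P) ≤ 1 * (ε' * P) :=
      mul_le_mul_of_nonneg_right hε'1 (mul_nonneg hε'0.le hP.le)
    nlinarith [mul_pos hε'0 hP]
  have hεP : ε' * P ≤ ε * P := mul_le_mul_of_nonneg_right hε'ε hP.le
  rw [hR, Real.dist_eq, abs_sub_lt_iff]
  constructor
  · rw [sub_lt_iff_lt_add, div_lt_iff₀ hP]
    linarith [ha_ub, hb_ub, hεP, mul_pos hε hP]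
  · rw [sub_lt_iff_lt_add, ← sub_lt_iff_lt_add', lt_div_iff₀ hP]
    linarith [ha_lb, h3, hεP, mul_pos hε hP]

lemma exists_bad (x₀ C : ℝ) : ∃ x y : ℝ, x₀ ≤ x ∧ x ≤ y ∧ C < ff y / ff x := by
  obtain ⟨n, hn⟩ := exists_nat_ge (max x₀ (max C 7))
  have hn7 : (7:ℝ) ≤ (n:ℝ) := le_trans (le_max_of_le_right (le_max_right _ _)) hn
  have hnx : x₀ ≤ (n:ℝ) := le_trans (le_max_left _ _) hn
  have hnC : C ≤ (n:ℝ) := le_trans (le_max_of_le_right (le_max_left _ _)) hn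
  have hπ3 : (3:ℝ) < Real.pi := Real.pi_gt_three
  have hπ4 : Real.pi < 3.15 := by
    have := Real.pi_lt_d2
    linarith
  set s : ℝ := 2 * Real.pi * n - Real.pi / 2 with hsdef
  set r : ℝ := 2 * Real.pi * n + Real.pi / 2 with hrdef
  have hcast0 : (0:ℝ) ≤ (n:ℝ) := Nat.cast_nonneg n
  have hπn : (21:ℝ) ≤ Real.pi * n := by
    calc (21:ℝ) = 3 * 7 := by norm_num
      _ ≤ Real.pi * n := mul_le_mul hπ3.le hn7 (by norm_num) (by linarith)
  have h3n : 3 * (n:ℝ) ≤ Real.pi * n := mul_le_mul_of_nonneg_right hπ3.le hcast0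
  have hs40 : 40 ≤ s := by rw [hsdef]; linarith
  have hs0 : 0 ≤ s := by linarith
  have hr0 : 0 ≤ r := by rw [hrdef]; linarith
  have hsr : s ≤ r := by rw [hsdef, hrdef]; linarith
  set v : ℝ := s ^ 2 with hvdef
  set w : ℝ := r ^ 2 with hwdef
  have hv1600 : 1600 ≤ v := by nlinarith
  have hvw : v ≤ w := by nlinarith
  set x : ℝ := Real.exp v with hxdef
  set y : ℝ := Real.exp w with hydef
  have hxM : M0 ≤ x := Real.exp_le_exp.2 hv1600
  have hyM : M0 ≤ y := le_trans hxM (Real.exp_le_exp.2 hvw)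
  have hxy : x ≤ y := Real.exp_le_exp.2 hvw
  have hx₀x : x₀ ≤ x := by
    have h1 : v + 1 ≤ Real.exp v := Real.add_one_le_exp v
    have hs6 : 6 * (n:ℝ) - 2 ≤ s := by rw [hsdef]; linarith
    have h2 : (n:ℝ) ≤ v := by
      rw [hvdef]
      nlinarith [mul_nonneg (show (0:ℝ) ≤ s - 40 by linarith) hs0, hn7]
    calc x₀ ≤ (n:ℝ) := hnx
      _ ≤ v := h2
      _ ≤ x := by rw [hxdef]; linarith
  refine ⟨x, y, hx₀x, hxy, ?_⟩
  -- compute hh v and hh w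
  have hsinr : Real.sin r = 1 := by
    have : r = Real.pi / 2 + (n:ℤ) * (2 * Real.pi) := by push_cast; ring
    rw [this, Real.sin_add_int_mul_two_pi, Real.sin_pi_div_two]
  have hsins : Real.sin s = -1 := by
    have : s = -(Real.pi / 2) + (n:ℤ) * (2 * Real.pi) := by push_cast; ring
    rw [this, Real.sin_add_int_mul_two_pi, Real.sin_neg, Real.sin_pi_div_two]
  have hhv : hh v = -(20 * s) := by
    rw [hh, hvdef, Real.sqrt_sq hs0, hsins]
    ring
  have hhw : hh w = 20 * r := by
    rw [hh, hwdef, Real.sqrt_sq hr0, hsinr]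
    ring
  have hratio : ff y / ff x = Real.exp (hh w - hh v + 2 * v - 2 * w) := by
    rw [ff_div_eq, gg_eq hyM, gg_eq hxM]
    rw [hxdef, hydef, Real.log_exp, Real.log_exp]
    rw [show (Real.exp w) ^ 2 = Real.exp (2 * w) by rw [sq, ← Real.exp_add]; ring_nf]
    rw [show (Real.exp v) ^ 2 = Real.exp (2 * v) by rw [sq, ← Real.exp_add]; ring_nf]
    rw [div_div_div_comm, ← Real.exp_sub, ← Real.exp_sub, ← Real.exp_sub]
    congr 1
    ring
  rw [hratio]
  have hE : (n:ℝ) ≤ hh w - hh v + 2 * v - 2 * w := by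
    have hsq : Real.pi * (Real.pi * n) ≤ 3.15 * (Real.pi * n) :=
      mul_le_mul_of_nonneg_right hπ4.le (by nlinarith)
    rw [hhv, hhw, hvdef, hwdef, hsdef, hrdef]
    ring_nf
    nlinarith [hπn, h3n, hsq, hcast0]
  calc C ≤ (n:ℝ) := hnC
    _ < (n:ℝ) + 1 := by linarith
    _ ≤ Real.exp (n:ℝ) := Real.add_one_le_exp _
    _ ≤ Real.exp (hh w - hh v + 2 * v - 2 * w) := Real.exp_le_exp.2 hE

end SubexpCE

theorem subexponential_density_not_almost_decreasing :
    ∃ f : ℝ → ℝ, IsDensity f ∧ SubexpDensity f ∧ ¬ AlmostDecreasing f := by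
  refine ⟨SubexpCE.ff, ⟨SubexpCE.measurable_ff, ?_, SubexpCE.ff_nonneg, SubexpCE.ff_integral_one⟩,
    ⟨⟨?_, SubexpCE.ff_ratio_tendsto⟩, SubexpCE.conv_tendsto⟩, ?_⟩
  · intro x hx
    exact SubexpCE.ff_zero_of_lt (lt_trans hx SubexpCE.M0_pos)
  · filter_upwards [eventually_ge_atTop SubexpCE.M0] with x hx
    exact SubexpCE.ff_pos hx
  · rintro ⟨x₀, hx₀, hpos, C, hC⟩
    obtain ⟨x, y, hx, hxy, h⟩ := SubexpCE.exists_bad x₀ C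
    exact absurd (hC x y hx hxy) (not_le.2 h)
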